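/- Let s^1,…,s^k be time series with s^l ∈ ℝ^{m_l}, let L ≤ U be real numbers, and let z ∈ ℝ^n be a time series with L ≤ z_j ≤ U for all j ∈ {1,…,n}. Then the Fréchet function satisfies F(z) ≥ (1/k) ∑_{l=1}^k ∑_{i=1}^{m_l} pen(s^l_i; L, U). -/
import Mathlib


/-- A warping path of order `m × n`: a finite sequence of pairs of positive
integers starting at `(1,1)`, ending at `(m,n)`, each step increasing the
coordinates by `(1,0)`, `(0,1)` or `(1,1)`. -/
structure WarpingPath (m n : ℕ) where
  len : ℕ
  len_pos : 0 < len
  pt : ℕ → ℕ × ℕ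
  first : pt 0 = (1, 1)
  last : pt (len - 1) = (m, n)
  step : ∀ t, t + 1 < len →
    pt (t + 1) = ((pt t).1 + 1, (pt t).2) ∨
    pt (t + 1) = ((pt t).1, (pt t).2 + 1) ∨
    pt (t + 1) = ((pt t).1 + 1, (pt t).2 + 1)

/-- The set of vertices `V(P)` of a warping path. -/
def WarpingPath.V {m n : ℕ} (P : WarpingPath m n) : Finset (ℕ × ℕ) :=
  (Finset.range P.len).image P.pt

/-- The cost `C_P(s, s') = ∑_{(i,j) ∈ V(P)} (s_i − s'_j)²` of a warping path. -/
noncomputable def WarpingPath.cost {m n : ℕ} (P : WarpingPath m n) (s s' : ℕ → ℝ) : ℝ :=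
  ∑ v ∈ P.V, (s v.1 - s' v.2) ^ 2

/-- The dtw-distance between a time series `s` of length `m` and a time series
`s'` of length `n`: the minimum over all warping paths `P` of order `m × n` of
`√(C_P(s, s'))`. -/
noncomputable def dtw (m n : ℕ) (s s' : ℕ → ℝ) : ℝ :=
  Real.sqrt (sInf {c : ℝ | ∃ P : WarpingPath m n, c = P.cost s s'})

/-- The penalty `pen(a; L, U)`: `(a − U)²` if `a > U`, `(L − a)²` if `a < L`,
and `0` otherwise. -/
noncomputable def pen (L U a : ℝ) : ℝ :=
  if U < a then (a - U) ^ 2 else if a < L then (L - a) ^ 2 else 0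

lemma nat_ivt (f : ℕ → ℕ) (N : ℕ) (h : ∀ t < N, f (t+1) ≤ f t + 1)
    (c : ℕ) (h0 : f 0 ≤ c) (hN : c ≤ f N) : ∃ t ≤ N, f t = c := by
  induction N with
  | zero => exact ⟨0, le_refl 0, le_antisymm h0 hN⟩
  | succ N ih =>
      by_cases hc : c ≤ f N
      · obtain ⟨t, ht, hft⟩ := ih (fun t ht => h t (by omega)) hc
        exact ⟨t, by omega, hft⟩
      · have := h N (by omega)
        exact ⟨N+1, le_refl _, by omega⟩

lemma mono_of_step (f : ℕ → ℕ) (N : ℕ) (h : ∀ t < N, f t ≤ f (t+1)) :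
    ∀ a b, a ≤ b → b ≤ N → f a ≤ f b := by
  intro a b hab hbN
  induction b with
  | zero => exact Nat.le_zero.mp hab ▸ le_rfl
  | succ b ih =>
      rcases Nat.eq_or_lt_of_le hab with rfl | hlt
      · exact le_refl _
      · exact (ih (by omega) (by omega)).trans (h b (by omega))

lemma pen_le_sq {L U a x : ℝ} (h1 : L ≤ x) (h2 : x ≤ U) : pen L U a ≤ (x - a) ^ 2 := by
  unfold pen
  split_ifs with hU hL
  · nlinarith
  · nlinarith
  · positivity

/-- A concrete warping path: go across then down. -/
noncomputable def diagPath (n m : ℕ) (hn : 1 ≤ n) (hm : 1 ≤ m) : WarpingPath n m where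
  len := n + m - 1
  len_pos := by omega
  pt t := (min (t+1) n, max (t + 2 - n) 1)
  first := by
    have : min 1 n = 1 := by omega
    have : max (2 - n) 1 = 1 := by omega
    simp only [Prod.mk.injEq]; omega
  last := by simp only [Prod.mk.injEq]; omega
  step := by
    intro t ht
    simp only [Prod.mk.injEq]
    by_cases h : t + 2 ≤ n
    · left; omega
    · right; left; omega

lemma path_cost_lb (n mm : ℕ) (hn : 1 ≤ n) (hm : 1 ≤ mm) (z sl : ℕ → ℝ)
    (L U : ℝ) (hz : ∀ j ∈ Finset.Icc 1 n, L ≤ z j ∧ z j ≤ U)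
    (P : WarpingPath n mm) :
    ∑ i ∈ Finset.Icc 1 mm, pen L U (sl i) ≤ P.cost z sl := by
  have hstep1 : ∀ t < P.len - 1, (P.pt t).1 ≤ (P.pt (t+1)).1 := by
    intro t ht
    rcases P.step t (by omega) with h | h | h <;> rw [h] <;> simp
  have hstep2le : ∀ t < P.len - 1, (P.pt (t+1)).2 ≤ (P.pt t).2 + 1 := by
    intro t ht
    rcases P.step t (by omega) with h | h | h <;> rw [h] <;> simp
  have hstep2 : ∀ t < P.len - 1, (P.pt t).2 ≤ (P.pt (t+1)).2 := by
    intro t ht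
    rcases P.step t (by omega) with h | h | h <;> rw [h] <;> simp
  have h01 : (P.pt 0).1 = 1 := by rw [P.first]
  have h02 : (P.pt 0).2 = 1 := by rw [P.first]
  have hl1 : (P.pt (P.len - 1)).1 = n := by rw [P.last]
  have hl2 : (P.pt (P.len - 1)).2 = mm := by rw [P.last]
  -- for each i in [1, mm], choose t with (pt t).2 = i
  have hex : ∀ i ∈ Finset.Icc 1 mm, ∃ t ≤ P.len - 1, (P.pt t).2 = i := by
    intro i hi
    rw [Finset.mem_Icc] at hi
    exact nat_ivt (fun t => (P.pt t).2) (P.len - 1) hstep2le i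
      (show (P.pt 0).2 ≤ i by omega) (show i ≤ (P.pt (P.len - 1)).2 by omega)
  choose tof htof1 htof2 using hex
  set g : ℕ → ℕ × ℕ := fun i => if h : i ∈ Finset.Icc 1 mm then P.pt (tof i h) else (0,0) with hg
  have hgmem : ∀ i ∈ Finset.Icc 1 mm, g i ∈ P.V := by
    intro i hi
    simp only [hg, dif_pos hi]
    refine Finset.mem_image.2 ⟨tof i hi, Finset.mem_range.2 (by have := htof1 i hi; have := P.len_pos; omega), rfl⟩
  have hg2 : ∀ i ∈ Finset.Icc 1 mm, (g i).2 = i := by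
    intro i hi; simp only [hg, dif_pos hi]; exact htof2 i hi
  have hg1 : ∀ i ∈ Finset.Icc 1 mm, 1 ≤ (g i).1 ∧ (g i).1 ≤ n := by
    intro i hi
    simp only [hg, dif_pos hi]
    constructor
    · have h : (P.pt 0).1 ≤ (P.pt (tof i hi)).1 :=
        mono_of_step (fun t => (P.pt t).1) (P.len - 1) hstep1 0 (tof i hi) (by omega) (htof1 i hi)
      omega
    · have h : (P.pt (tof i hi)).1 ≤ (P.pt (P.len - 1)).1 :=
        mono_of_step (fun t => (P.pt t).1) (P.len - 1) hstep1 (tof i hi) (P.len - 1) (htof1 i hi) le_rfl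
      omega
  have hinj : Set.InjOn g (Finset.Icc 1 mm) := by
    intro a ha b hb hab
    have := hg2 a ha; have := hg2 b hb
    rw [← hg2 a ha, hab, hg2 b hb]
  calc ∑ i ∈ Finset.Icc 1 mm, pen L U (sl i)
      ≤ ∑ i ∈ Finset.Icc 1 mm, (z (g i).1 - sl (g i).2) ^ 2 := by
        apply Finset.sum_le_sum
        intro i hi
        rw [hg2 i hi]
        exact pen_le_sq (hz _ (Finset.mem_Icc.2 ⟨(hg1 i hi).1, (hg1 i hi).2⟩)).1
          (hz _ (Finset.mem_Icc.2 ⟨(hg1 i hi).1, (hg1 i hi).2⟩)).2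
    _ = ∑ v ∈ (Finset.Icc 1 mm).image g, (z v.1 - sl v.2) ^ 2 := by
        rw [Finset.sum_image (fun a ha b hb => hinj ha hb)]
    _ ≤ P.cost z sl := by
        apply Finset.sum_le_sum_of_subset_of_nonneg
        · intro v hv
          obtain ⟨i, hi, rfl⟩ := Finset.mem_image.1 hv
          exact hgmem i hi
        · intro v _ _; positivity


theorem stmt6 (k : ℕ) (hk : 1 ≤ k) (m : Fin k → ℕ) (hm : ∀ l, 1 ≤ m l)
    (s : Fin k → ℕ → ℝ) (n : ℕ) (hn : 1 ≤ n) (z : ℕ → ℝ)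
    (L U : ℝ) (hLU : L ≤ U) (hz : ∀ j ∈ Finset.Icc 1 n, L ≤ z j ∧ z j ≤ U) :
    (1 / (k : ℝ)) * ∑ l : Fin k, (dtw n (m l) z (s l)) ^ 2 ≥
      (1 / (k : ℝ)) * ∑ l : Fin k, ∑ i ∈ Finset.Icc 1 (m l), pen L U (s l i) := by
  have hpen_nonneg : ∀ (a : ℝ), 0 ≤ pen L U a := by
    intro a; unfold pen; split_ifs <;> positivity
  apply mul_le_mul_of_nonneg_left _ (by positivity)
  apply Finset.sum_le_sum
  intro l _
  set S := {c : ℝ | ∃ P : WarpingPath n (m l), c = P.cost z (s l)} with hS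
  have hB : ∀ c ∈ S, ∑ i ∈ Finset.Icc 1 (m l), pen L U (s l i) ≤ c := by
    rintro c ⟨P, rfl⟩
    exact path_cost_lb n (m l) hn (hm l) z (s l) L U hz P
  have hne : S.Nonempty := ⟨_, ⟨diagPath n (m l) hn (hm l), rfl⟩⟩
  have hinf : ∑ i ∈ Finset.Icc 1 (m l), pen L U (s l i) ≤ sInf S :=
    le_csInf hne hB
  have hinf0 : 0 ≤ sInf S :=
    le_trans (Finset.sum_nonneg fun i _ => hpen_nonneg _) hinf
  unfold dtw
  rw [Real.sq_sqrt hinf0]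
  exact hinf
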